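/- Suppose f : ℝ^{N×n} → ℝ is strictly W^{1,φ}-quasiconvex in the sense that ∫_B [f(Q + ∇w) − f(Q)] dx ≥ k ∫_B φ_{|Q|}(|∇w|) dx for all balls B, all Q ∈ ℝ^{N×n}, and all w ∈ C¹₀(B; ℝ^N), and that f is C² away from 0. Then for every Q ∈ ℝ^{N×n} \ {0}, every ball B, and every w ∈ C¹₀(B; ℝ^N), ∫_B (D²f)(Q)(∇w, ∇w) dx ≥ c φ''(|Q|) ∫_B |∇w|² dx, where c > 0 depends only on k and the characteristics of φ. -/

import Mathlib

open Set Filter MeasureTheory Metric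

def IsNFunction (ψ ψ' : ℝ → ℝ) : Prop :=
  ψ 0 = 0 ∧
  (∀ t ∈ Set.Ici (0:ℝ), HasDerivWithinAt ψ (ψ' t) (Set.Ici 0) t) ∧
  MonotoneOn ψ' (Set.Ici 0) ∧
  (∀ t ∈ Set.Ici (0:ℝ), ContinuousWithinAt ψ' (Set.Ici t) t) ∧
  ψ' 0 = 0 ∧
  (∀ t > (0:ℝ), 0 < ψ' t) ∧
  Filter.Tendsto ψ' Filter.atTop Filter.atTop

noncomputable def shiftFn (φ' : ℝ → ℝ) (a t : ℝ) : ℝ :=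
  ∫ s in (0:ℝ)..t, φ' (a + s) * s / (a + s)

/-- The gradient of `w : ℝⁿ → ℝ^N` at `x`, viewed as a matrix in `ℝ^{N×n}`. -/
noncomputable def gradMat {n N : ℕ}
    (w : EuclideanSpace ℝ (Fin n) → EuclideanSpace ℝ (Fin N))
    (x : EuclideanSpace ℝ (Fin n)) : EuclideanSpace ℝ (Fin N × Fin n) :=
  WithLp.toLp 2 (fun p : Fin N × Fin n => fderiv ℝ w x (EuclideanSpace.single p.2 1) p.1)

set_option linter.unusedSectionVars false
set_option linter.unusedVariables false
section shift
variable {φ' : ℝ → ℝ} {a : ℝ} (ha : 0 < a)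
  (hmono : MonotoneOn φ' (Set.Ici 0)) (h0 : φ' 0 = 0)
include ha hmono h0

lemma phi'_nonneg {t : ℝ} (ht : 0 ≤ t) : 0 ≤ φ' t := by
  rw [← h0]; exact hmono (le_refl (0:ℝ)) ht ht

lemma shift_integrand_mono : MonotoneOn (fun u => φ' (a + u) * u / (a + u)) (Set.Ici 0) := by
  intro u₁ h₁ u₂ h₂ h12
  simp only [Set.mem_Ici] at h₁ h₂
  have hau₁ : (0:ℝ) < a + u₁ := by linarith
  have hau₂ : (0:ℝ) < a + u₂ := by linarith
  have hφ₁ : 0 ≤ φ' (a + u₁) := phi'_nonneg ha hmono h0 (by linarith)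
  have hφ : φ' (a + u₁) ≤ φ' (a + u₂) :=
    hmono (by simp; linarith) (by simp; linarith) (by linarith)
  have hfrac : u₁ / (a + u₁) ≤ u₂ / (a + u₂) := by
    rw [div_le_div_iff₀ hau₁ hau₂]; nlinarith
  calc φ' (a + u₁) * u₁ / (a + u₁) = φ' (a + u₁) * (u₁ / (a + u₁)) := by ring
    _ ≤ φ' (a + u₂) * (u₂ / (a + u₂)) := by
        apply mul_le_mul hφ hfrac (by positivity) (phi'_nonneg ha hmono h0 (by linarith))
    _ = φ' (a + u₂) * u₂ / (a + u₂) := by ring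

lemma shift_intervalIntegrable {s₁ s₂ : ℝ} (h₁ : 0 ≤ s₁) (h₂ : 0 ≤ s₂) :
    IntervalIntegrable (fun u => φ' (a + u) * u / (a + u)) volume s₁ s₂ :=
  MonotoneOn.intervalIntegrable ((shift_integrand_mono ha hmono h0).mono
    (fun u hu => le_trans (le_min h₁ h₂) hu.1))

lemma shift_nonneg {s : ℝ} (hs : 0 ≤ s) : 0 ≤ shiftFn φ' a s := by
  apply intervalIntegral.integral_nonneg hs
  intro u hu
  have : (0:ℝ) < a + u := by have := hu.1; linarith
  have : 0 ≤ φ' (a + u) := phi'_nonneg ha hmono h0 (by have := hu.1; linarith)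
  have hu1 := hu.1
  positivity

lemma shift_mono {s₁ s₂ : ℝ} (h₁ : 0 ≤ s₁) (h12 : s₁ ≤ s₂) :
    shiftFn φ' a s₁ ≤ shiftFn φ' a s₂ := by
  have key : shiftFn φ' a s₁ + ∫ u in s₁..s₂, φ' (a + u) * u / (a + u) = shiftFn φ' a s₂ :=
    intervalIntegral.integral_add_adjacent_intervals
      (shift_intervalIntegrable ha hmono h0 le_rfl h₁)
      (shift_intervalIntegrable ha hmono h0 h₁ (h₁.trans h12))
  have hnn : 0 ≤ ∫ u in s₁..s₂, φ' (a + u) * u / (a + u) := by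
    apply intervalIntegral.integral_nonneg h12
    intro u hu
    have hu1 : s₁ ≤ u := hu.1
    have h0u : (0:ℝ) ≤ u := h₁.trans hu1
    have : (0:ℝ) < a + u := by linarith
    have : 0 ≤ φ' (a + u) := phi'_nonneg ha hmono h0 (by linarith)
    positivity
  linarith

lemma shift_lower {s : ℝ} (hs : 0 ≤ s) (hsa : s ≤ a) :
    φ' a * s ^ 2 / (4 * a) ≤ shiftFn φ' a s := by
  have key : ∫ u in (0:ℝ)..s, φ' a / (2 * a) * u ≤ shiftFn φ' a s := by
    apply intervalIntegral.integral_mono_on hs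
    · exact Continuous.intervalIntegrable (by continuity) _ _
    · exact shift_intervalIntegrable ha hmono h0 le_rfl hs
    · intro u hu
      obtain ⟨hu0, hus⟩ := hu
      have hau : (0:ℝ) < a + u := by linarith
      have h2a : a + u ≤ 2 * a := by linarith
      have hφ : φ' a ≤ φ' (a + u) := hmono (le_of_lt ha) (by simp; linarith) (by linarith)
      have hφa : 0 ≤ φ' a := phi'_nonneg ha hmono h0 ha.le
      have hfrac : u / (2 * a) ≤ u / (a + u) := by
        apply div_le_div_of_nonneg_left hu0 hau h2a
      calc φ' a / (2 * a) * u = φ' a * (u / (2 * a)) := by ring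
        _ ≤ φ' (a + u) * (u / (a + u)) := by
            apply mul_le_mul hφ hfrac (by positivity) (hφa.trans hφ)
        _ = φ' (a + u) * u / (a + u) := by ring
  have : ∫ u in (0:ℝ)..s, φ' a / (2 * a) * u = φ' a / (2 * a) * (s ^ 2 / 2) := by
    rw [intervalIntegral.integral_const_mul, integral_id]; ring_nf
  rw [this] at key
  calc φ' a * s ^ 2 / (4 * a) = φ' a / (2 * a) * (s ^ 2 / 2) := by ring
    _ ≤ shiftFn φ' a s := key
end shift


lemma taylor_aux {E : Type*} [NormedAddCommGroup E] [NormedSpace ℝ E]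
    {f : E → ℝ} (hf : ContDiff ℝ 1 f) (Q : E)
    (hB : HasFDerivAt (fderiv ℝ f) (fderiv ℝ (fderiv ℝ f) Q) Q)
    {ε : ℝ} (hε : 0 < ε) :
    ∃ δ > 0, ∀ P : E, ‖P‖ ≤ δ →
      f (Q + P) + f (Q - P) - 2 * f Q ≤
        fderiv ℝ (fderiv ℝ f) Q P P + ε * ‖P‖ ^ 2 := by
  set B := fderiv ℝ (fderiv ℝ f) Q with hBdef
  have hε2 : 0 < ε / 2 := by linarith
  have hlo := hB.isLittleO.def hε2
  rw [Metric.eventually_nhds_iff] at hlo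
  obtain ⟨δ, hδ, hδ'⟩ := hlo
  refine ⟨δ / 2, by linarith, fun P hP => ?_⟩
  have hest : ∀ h : E, ‖h‖ ≤ δ / 2 →
      ‖fderiv ℝ f (Q + h) - fderiv ℝ f Q - B h‖ ≤ ε / 2 * ‖h‖ := by
    intro h hh
    have hd : dist (Q + h) Q < δ := by
      rw [dist_eq_norm]; simp only [add_sub_cancel_left]; linarith
    have := hδ' hd
    simpa [add_sub_cancel_left] using this
  set u : ℝ → ℝ := fun s => f (Q + s • P) + f (Q - s • P) - 2 * f Q - s ^ 2 * B P P with hu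
  set u' : ℝ → ℝ := fun s =>
    fderiv ℝ f (Q + s • P) P - fderiv ℝ f (Q - s • P) P - 2 * s * B P P with hu'
  have hdiff : Differentiable ℝ f := hf.differentiable one_ne_zero
  have hud : ∀ s : ℝ, HasDerivAt u (u' s) s := by
    intro s
    have h1 : HasDerivAt (fun s : ℝ => Q + s • P) P s := by
      simpa using ((hasDerivAt_id s).smul_const P).const_add Q
    have h2 : HasDerivAt (fun s : ℝ => Q - s • P) (-P) s := by
      simpa using ((hasDerivAt_id s).smul_const P).const_sub Q
    have hf1 : HasDerivAt (fun s : ℝ => f (Q + s • P)) (fderiv ℝ f (Q + s • P) P) s :=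
      (hdiff (Q + s • P)).hasFDerivAt.comp_hasDerivAt s h1
    have hf2 : HasDerivAt (fun s : ℝ => f (Q - s • P)) (fderiv ℝ f (Q - s • P) (-P)) s :=
      (hdiff (Q - s • P)).hasFDerivAt.comp_hasDerivAt s h2
    have hsq : HasDerivAt (fun s : ℝ => s ^ 2 * B P P) (2 * s * B P P) s := by
      simpa using (hasDerivAt_pow 2 s).mul_const (B P P)
    have := ((hf1.add hf2).sub_const (2 * f Q)).sub hsq
    refine this.congr_deriv ?_
    simp [hu', map_neg]
    ring
  -- bound on u'
  have hbound : ∀ s ∈ Set.Icc (0:ℝ) 1, ‖u' s‖ ≤ ε * ‖P‖ ^ 2 := by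
    intro s hs
    obtain ⟨hs0, hs1⟩ := hs
    have hsP : ‖s • P‖ ≤ δ / 2 := by
      rw [norm_smul, Real.norm_eq_abs, abs_of_nonneg hs0]
      calc s * ‖P‖ ≤ 1 * ‖P‖ := by
            apply mul_le_mul_of_nonneg_right hs1 (norm_nonneg P)
        _ = ‖P‖ := one_mul _
        _ ≤ δ / 2 := hP
    have e1 := hest (s • P) hsP
    have e2 := hest (-(s • P)) (by rwa [norm_neg])
    have key : u' s = (fderiv ℝ f (Q + s • P) - fderiv ℝ f Q - B (s • P)) P
        - (fderiv ℝ f (Q + -(s • P)) - fderiv ℝ f Q - B (-(s • P))) P := by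
      have hq : Q + -(s • P) = Q - s • P := (sub_eq_add_neg Q (s • P)).symm
      simp only [hu', ContinuousLinearMap.sub_apply, map_neg, ContinuousLinearMap.neg_apply,
        hq, _root_.map_smul, ContinuousLinearMap.smul_apply, smul_eq_mul]
      ring
    rw [key]
    have n1 : ‖(fderiv ℝ f (Q + s • P) - fderiv ℝ f Q - B (s • P)) P‖ ≤ ε / 2 * ‖s • P‖ * ‖P‖ := by
      calc ‖(fderiv ℝ f (Q + s • P) - fderiv ℝ f Q - B (s • P)) P‖
          ≤ ‖fderiv ℝ f (Q + s • P) - fderiv ℝ f Q - B (s • P)‖ * ‖P‖ :=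
            ContinuousLinearMap.le_opNorm _ P
        _ ≤ ε / 2 * ‖s • P‖ * ‖P‖ := by
            apply mul_le_mul_of_nonneg_right (e1) (norm_nonneg P)
    have n2 : ‖(fderiv ℝ f (Q + -(s • P)) - fderiv ℝ f Q - B (-(s • P))) P‖
        ≤ ε / 2 * ‖s • P‖ * ‖P‖ := by
      calc ‖(fderiv ℝ f (Q + -(s • P)) - fderiv ℝ f Q - B (-(s • P))) P‖
          ≤ ‖fderiv ℝ f (Q + -(s • P)) - fderiv ℝ f Q - B (-(s • P))‖ * ‖P‖ :=
            ContinuousLinearMap.le_opNorm _ P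
        _ ≤ ε / 2 * ‖-(s • P)‖ * ‖P‖ := by
            apply mul_le_mul_of_nonneg_right (e2) (norm_nonneg P)
        _ = ε / 2 * ‖s • P‖ * ‖P‖ := by rw [norm_neg]
    have hsPn : ‖s • P‖ ≤ ‖P‖ := by
      rw [norm_smul, Real.norm_eq_abs, abs_of_nonneg hs0]
      calc s * ‖P‖ ≤ 1 * ‖P‖ := mul_le_mul_of_nonneg_right hs1 (norm_nonneg P)
        _ = ‖P‖ := one_mul _
    calc ‖(fderiv ℝ f (Q + s • P) - fderiv ℝ f Q - B (s • P)) P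
        - (fderiv ℝ f (Q + -(s • P)) - fderiv ℝ f Q - B (-(s • P))) P‖
        ≤ _ + _ := norm_sub_le _ _
      _ ≤ ε / 2 * ‖s • P‖ * ‖P‖ + ε / 2 * ‖s • P‖ * ‖P‖ := add_le_add n1 n2
      _ ≤ ε / 2 * ‖P‖ * ‖P‖ + ε / 2 * ‖P‖ * ‖P‖ := by
          have : ε / 2 * ‖s • P‖ * ‖P‖ ≤ ε / 2 * ‖P‖ * ‖P‖ := by
            apply mul_le_mul_of_nonneg_right _ (norm_nonneg P)
            apply mul_le_mul_of_nonneg_left hsPn (by linarith)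
          linarith
      _ = ε * ‖P‖ ^ 2 := by ring
  -- mean value inequality
  have hmvt := norm_image_sub_le_of_norm_deriv_le_segment'
    (f := u) (f' := u') (a := 0) (b := 1)
    (fun s hs => (hud s).hasDerivWithinAt)
    (fun s hs => hbound s (Set.mem_Icc.2 ⟨hs.1, hs.2.le⟩))
    1 (Set.mem_Icc.2 ⟨zero_le_one, le_rfl⟩)
  have hu0 : u 0 = 0 := by simp [hu]; ring
  have hu1 : u 1 = f (Q + P) + f (Q - P) - 2 * f Q - B P P := by simp [hu]
  rw [hu0, hu1, sub_zero] at hmvt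
  have := le_trans (le_abs_self _) (by simpa using hmvt)
  linarith

section gradMat

variable {n N : ℕ} {w : EuclideanSpace ℝ (Fin n) → EuclideanSpace ℝ (Fin N)}

lemma gradMat_continuous (hw : ContDiff ℝ 1 w) : Continuous (gradMat w) := by
  have hfd : Continuous (fderiv ℝ w) := hw.continuous_fderiv one_ne_zero
  have : ∀ p : Fin N × Fin n, Continuous fun x => gradMat w x p := by
    intro p
    exact (EuclideanSpace.proj p.1).continuous.comp
      ((ContinuousLinearMap.apply ℝ _ (EuclideanSpace.single p.2 1)).continuous.comp hfd)
  exact (PiLp.continuous_toLp ..).comp (continuous_pi this)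

lemma gradMat_zero_of_fderiv_zero {x} (h : fderiv ℝ w x = 0) : gradMat w x = 0 := by
  ext p; simp [gradMat, h]

lemma gradMat_compactSupport (hc : HasCompactSupport w) : HasCompactSupport (gradMat w) := by
  apply (hc.fderiv ℝ).mono
  intro x hx
  simp only [Function.mem_support] at hx ⊢
  intro h
  exact hx (gradMat_zero_of_fderiv_zero h)

lemma gradMat_smul (hw : ContDiff ℝ 1 w) (t : ℝ) (x : EuclideanSpace ℝ (Fin n)) :
    gradMat (fun y => t • w y) x = t • gradMat w x := by
  ext p
  have := fderiv_fun_const_smul (hw.differentiable one_ne_zero x) t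
  simp only [gradMat, this, ContinuousLinearMap.smul_apply, PiLp.smul_apply]

end gradMat


set_option maxHeartbeats 1000000 in
theorem quasiconvex_legendre_hadamard (c₁ c₂ k : ℝ) (hc₁ : 0 < c₁) (hc₂ : 0 < c₂)
    (hk : 0 < k) :
    ∃ c : ℝ, 0 < c ∧
      ∀ (N n : ℕ) (φ φ' φ'' : ℝ → ℝ), IsNFunction φ φ' →
        (∀ t > (0:ℝ), HasDerivAt φ' (φ'' t) t) →
        (∀ t > (0:ℝ), ContinuousAt φ'' t) →
        (∀ t > (0:ℝ), c₁ * φ' t ≤ t * φ'' t ∧ t * φ'' t ≤ c₂ * φ' t) →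
        ∀ f : EuclideanSpace ℝ (Fin N × Fin n) → ℝ,
          ContDiff ℝ 1 f →
          ContDiffOn ℝ 2 f {(0 : EuclideanSpace ℝ (Fin N × Fin n))}ᶜ →
          -- strict W^{1,φ}-quasiconvexity
          (∀ (x₀ : EuclideanSpace ℝ (Fin n)) (r : ℝ), 0 < r →
            ∀ (Q : EuclideanSpace ℝ (Fin N × Fin n))
              (w : EuclideanSpace ℝ (Fin n) → EuclideanSpace ℝ (Fin N)),
              ContDiff ℝ 1 w → HasCompactSupport w → tsupport w ⊆ Metric.ball x₀ r →
              (∫ x in Metric.ball x₀ r, (f (Q + gradMat w x) - f Q)) ≥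
                k * ∫ x in Metric.ball x₀ r, shiftFn φ' ‖Q‖ ‖gradMat w x‖) →
          ∀ (Q : EuclideanSpace ℝ (Fin N × Fin n)), Q ≠ 0 →
            ∀ (x₀ : EuclideanSpace ℝ (Fin n)) (r : ℝ), 0 < r →
              ∀ w : EuclideanSpace ℝ (Fin n) → EuclideanSpace ℝ (Fin N),
                ContDiff ℝ 1 w → HasCompactSupport w →
                tsupport w ⊆ Metric.ball x₀ r →
                (∫ x in Metric.ball x₀ r,
                    fderiv ℝ (fderiv ℝ f) Q (gradMat w x) (gradMat w x)) ≥
                  c * φ'' ‖Q‖ * ∫ x in Metric.ball x₀ r, ‖gradMat w x‖ ^ 2 := by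
  refine ⟨k / (2 * c₂), by positivity, ?_⟩
  intro N n φ φ' φ'' hNF hφ''d hφ''c hchar f hf1 hf2 hqc Q hQ x₀ r hr w hw hcw hsupp
  obtain ⟨hφ0, hφd, hmono, hφ'c, hφ'0, hφ'pos, hφ'top⟩ := hNF
  set a := ‖Q‖ with ha_def
  have ha : 0 < a := norm_pos_iff.mpr hQ
  set g := gradMat w with hg_def
  have hgc : Continuous g := gradMat_continuous hw
  have hgcs : HasCompactSupport g := gradMat_compactSupport hcw
  -- bound on ‖g‖
  obtain ⟨xM, hxM⟩ := (hgc.norm).exists_forall_ge_of_hasCompactSupport hgcs.norm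
  set M := ‖g xM‖ with hM_def
  have hM0 : 0 ≤ M := norm_nonneg _
  -- second derivative at Q
  have hQ2 : ContDiffAt ℝ 2 f Q := hf2.contDiffAt (isOpen_compl_singleton.mem_nhds hQ)
  have hB : HasFDerivAt (fderiv ℝ f) (fderiv ℝ (fderiv ℝ f) Q) Q :=
    ((hQ2.fderiv_right (m := 1) (by norm_num)).differentiableAt (by norm_num)).hasFDerivAt
  set B := fderiv ℝ (fderiv ℝ f) Q with hB_def
  set S := Metric.ball x₀ r with hS_def
  have hSmeas : MeasurableSet S := measurableSet_ball
  have hSfin : volume S < ⊤ := measure_ball_lt_top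
  -- integrability of the two main integrands
  have hBg_cont : Continuous fun x => B (g x) (g x) :=
    isBoundedBilinearMap_apply.continuous.comp ((B.continuous.comp hgc).prodMk hgc)
  have hBg_supp : HasCompactSupport fun x => B (g x) (g x) := by
    apply hgcs.mono
    intro x hx
    simp only [Function.mem_support] at hx ⊢
    intro h
    apply hx; rw [h]; simp
  have hBg_int : IntegrableOn (fun x => B (g x) (g x)) S volume :=
    (hBg_cont.integrable_of_hasCompactSupport hBg_supp).integrableOn
  have hsq_cont : Continuous fun x => ‖g x‖ ^ 2 := (hgc.norm).pow 2
  have hsq_supp : HasCompactSupport fun x => ‖g x‖ ^ 2 := by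
    apply hgcs.mono
    intro x hx
    simp only [Function.mem_support] at hx ⊢
    intro h; apply hx; rw [h]; simp
  have hsq_int : IntegrableOn (fun x => ‖g x‖ ^ 2) S volume :=
    (hsq_cont.integrable_of_hasCompactSupport hsq_supp).integrableOn
  set I₂ := ∫ x in S, ‖g x‖ ^ 2 with hI₂_def
  set IA := ∫ x in S, B (g x) (g x) with hIA_def
  have hI₂nn : 0 ≤ I₂ :=
    setIntegral_nonneg hSmeas (fun x _ => by positivity)
  -- main estimate
  have main : k * φ' a / (2 * a) * I₂ ≤ IA := by
    have key : ∀ ε > (0:ℝ), k * φ' a / (2 * a) * I₂ ≤ IA + ε := by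
      intro ε hε
      set ε' := ε / (I₂ + 1) with hε'_def
      have hε' : 0 < ε' := div_pos hε (by linarith)
      obtain ⟨δ, hδ, htay⟩ := taylor_aux hf1 Q hB hε'
      set t := min δ a / (M + 1) with ht_def
      have ht : 0 < t := div_pos (lt_min hδ ha) (by linarith)
      have htM1 : t * (M + 1) = min δ a := div_mul_cancel₀ _ (by linarith)
      have htM : t * M ≤ min δ a := by nlinarith
      have htδ : t * M ≤ δ := htM.trans (min_le_left _ _)
      have hta : t * M ≤ a := htM.trans (min_le_right _ _)
      -- apply quasiconvexity to ±t • w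
      have hcsP : HasCompactSupport (fun y => t • w y) := by
        apply hcw.mono
        intro x hx
        simp only [Function.mem_support] at hx ⊢
        intro h0; apply hx; rw [h0]; simp
      have hcsm : HasCompactSupport (fun y => (-t) • w y) := by
        apply hcw.mono
        intro x hx
        simp only [Function.mem_support] at hx ⊢
        intro h0; apply hx; rw [h0]; simp
      have htsP : tsupport (fun y => t • w y) ⊆ S :=
        (tsupport_smul_subset_right (fun _ => t) w).trans hsupp
      have htsm : tsupport (fun y => (-t) • w y) ⊆ S :=
        (tsupport_smul_subset_right (fun _ => (-t)) w).trans hsupp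
      have hqcP := hqc x₀ r hr Q (fun y => t • w y) (hw.const_smul t) hcsP htsP
      have hqcm := hqc x₀ r hr Q (fun y => (-t) • w y) (hw.const_smul (-t)) hcsm htsm
      rw [← hS_def] at hqcP hqcm
      simp only [gradMat_smul hw, ← hg_def] at hqcP hqcm
      simp only [norm_smul, Real.norm_eq_abs, abs_of_pos ht] at hqcP
      simp only [neg_smul, ← sub_eq_add_neg, norm_neg, norm_smul, Real.norm_eq_abs,
        abs_of_pos ht] at hqcm
      -- integrability of the difference quotients
      have hcontP : Continuous fun x => f (Q + t • g x) - f Q :=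
        (hf1.continuous.comp (continuous_const.add (hgc.const_smul t))).sub continuous_const
      have hcontm : Continuous fun x => f (Q - t • g x) - f Q :=
        (hf1.continuous.comp (continuous_const.sub (hgc.const_smul t))).sub continuous_const
      have hsuppP : HasCompactSupport fun x => f (Q + t • g x) - f Q := by
        apply hgcs.mono
        intro x hx
        simp only [Function.mem_support] at hx ⊢
        intro h0; apply hx; rw [h0]; simp
      have hsuppm : HasCompactSupport fun x => f (Q - t • g x) - f Q := by
        apply hgcs.mono
        intro x hx
        simp only [Function.mem_support] at hx ⊢
        intro h0; apply hx; rw [h0]; simp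
      have hintP : IntegrableOn (fun x => f (Q + t • g x) - f Q) S volume :=
        (hcontP.integrable_of_hasCompactSupport hsuppP).integrableOn
      have hintm : IntegrableOn (fun x => f (Q - t • g x) - f Q) S volume :=
        (hcontm.integrable_of_hasCompactSupport hsuppm).integrableOn
      -- the symmetric sum
      have hadd : (∫ x in S, (f (Q + t • g x) - f Q)) + ∫ x in S, (f (Q - t • g x) - f Q)
          = ∫ x in S, (f (Q + t • g x) + f (Q - t • g x) - 2 * f Q) := by
        rw [← integral_add hintP hintm]
        exact integral_congr_ae (Eventually.of_forall fun x => by ring)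
      have hsum_int : IntegrableOn
          (fun x => f (Q + t • g x) + f (Q - t • g x) - 2 * f Q) S volume := by
        have : (fun x => f (Q + t • g x) + f (Q - t • g x) - 2 * f Q)
            = fun x => (f (Q + t • g x) - f Q) + (f (Q - t • g x) - f Q) := by
          funext x; ring
        rw [this]; exact hintP.add hintm
      -- Taylor upper bound
      have htay' : ∀ x ∈ S, f (Q + t • g x) + f (Q - t • g x) - 2 * f Q ≤
          t ^ 2 * B (g x) (g x) + ε' * t ^ 2 * ‖g x‖ ^ 2 := by
        intro x _
        have hPn : ‖t • g x‖ = t * ‖g x‖ := by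
          rw [norm_smul, Real.norm_eq_abs, abs_of_pos ht]
        have hP : ‖t • g x‖ ≤ δ := by
          rw [hPn]
          exact le_trans (mul_le_mul_of_nonneg_left (hxM x) ht.le) htδ
        have h1 := htay (t • g x) hP
        have hB2 : B (t • g x) (t • g x) = t ^ 2 * B (g x) (g x) := by
          simp only [ContinuousLinearMap.map_smul, ContinuousLinearMap.smul_apply,
            smul_eq_mul]
          ring
        have hn2 : ‖t • g x‖ ^ 2 = t ^ 2 * ‖g x‖ ^ 2 := by rw [hPn]; ring
        rw [hB2, hn2] at h1
        linarith
      have hup : (∫ x in S, (f (Q + t • g x) + f (Q - t • g x) - 2 * f Q)) ≤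
          t ^ 2 * IA + ε' * t ^ 2 * I₂ := by
        have hrhs : (∫ x in S, (t ^ 2 * B (g x) (g x) + ε' * t ^ 2 * ‖g x‖ ^ 2))
            = t ^ 2 * IA + ε' * t ^ 2 * I₂ := by
          rw [integral_add (hBg_int.const_mul _) (hsq_int.const_mul _),
            integral_const_mul, integral_const_mul]
        rw [← hrhs]
        exact setIntegral_mono_on hsum_int
          ((hBg_int.const_mul _).add (hsq_int.const_mul _)) hSmeas htay'
      -- shiftFn integrability and lower bound
      have hshift_meas : Measurable fun s : ℝ => shiftFn φ' a (max s 0) :=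
        Monotone.measurable (fun s₁ s₂ h =>
          shift_mono ha hmono hφ'0 (le_max_right _ _) (max_le_max h le_rfl))
      have hIs_int : IntegrableOn (fun x => shiftFn φ' a (t * ‖g x‖)) S volume := by
        have hmeq : (fun x => shiftFn φ' a (t * ‖g x‖))
            = fun x => shiftFn φ' a (max (t * ‖g x‖) 0) := by
          funext x; rw [max_eq_left (by positivity)]
        refine Integrable.mono' (g := fun _ => shiftFn φ' a (t * M))
          (integrableOn_const hSfin.ne) ?_ (Eventually.of_forall fun x => ?_)
        · rw [hmeq]
          exact (hshift_meas.comp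
            ((continuous_const.mul hgc.norm).measurable)).aestronglyMeasurable
        · rw [Real.norm_eq_abs, abs_of_nonneg (shift_nonneg ha hmono hφ'0 (by positivity))]
          exact shift_mono ha hmono hφ'0 (by positivity)
            (mul_le_mul_of_nonneg_left (hxM x) ht.le)
      have hIs_low : φ' a * t ^ 2 / (4 * a) * I₂ ≤ ∫ x in S, shiftFn φ' a (t * ‖g x‖) := by
        have hpt : ∀ x ∈ S, φ' a * t ^ 2 / (4 * a) * ‖g x‖ ^ 2 ≤ shiftFn φ' a (t * ‖g x‖) := by
          intro x _
          have h1 := shift_lower ha hmono hφ'0 (s := t * ‖g x‖) (by positivity)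
            (le_trans (mul_le_mul_of_nonneg_left (hxM x) ht.le) hta)
          calc φ' a * t ^ 2 / (4 * a) * ‖g x‖ ^ 2
              = φ' a * (t * ‖g x‖) ^ 2 / (4 * a) := by ring
            _ ≤ shiftFn φ' a (t * ‖g x‖) := h1
        calc φ' a * t ^ 2 / (4 * a) * I₂
            = ∫ x in S, φ' a * t ^ 2 / (4 * a) * ‖g x‖ ^ 2 := (integral_const_mul _ _).symm
          _ ≤ ∫ x in S, shiftFn φ' a (t * ‖g x‖) :=
              setIntegral_mono_on (hsq_int.const_mul _) hIs_int hSmeas hpt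
      -- combine
      have hchain : t ^ 2 * (k * φ' a / (2 * a) * I₂) ≤ t ^ 2 * (IA + ε' * I₂) := by
        have h2k : 2 * (k * ∫ x in S, shiftFn φ' a (t * ‖g x‖)) ≤
            t ^ 2 * IA + ε' * t ^ 2 * I₂ := by
          have e1 : (∫ x in S, (f (Q + t • g x) - f Q)) ≥
              k * ∫ x in S, shiftFn φ' a (t * ‖g x‖) := hqcP
          have e2 : (∫ x in S, (f (Q - t • g x) - f Q)) ≥
              k * ∫ x in S, shiftFn φ' a (t * ‖g x‖) := hqcm
          linarith [e1, e2, hup, hadd]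
        have h3 : k * (φ' a * t ^ 2 / (4 * a) * I₂) ≤
            k * ∫ x in S, shiftFn φ' a (t * ‖g x‖) :=
          mul_le_mul_of_nonneg_left hIs_low hk.le
        have h4 : t ^ 2 * (k * φ' a / (2 * a) * I₂)
            = 2 * (k * (φ' a * t ^ 2 / (4 * a) * I₂)) := by ring
        rw [h4]
        linarith
      have hc2 : k * φ' a / (2 * a) * I₂ ≤ IA + ε' * I₂ :=
        le_of_mul_le_mul_left hchain (pow_pos ht 2)
      have hfin : ε' * I₂ ≤ ε := by
        rw [hε'_def, div_mul_eq_mul_div, div_le_iff₀ (by linarith : (0:ℝ) < I₂ + 1)]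
        nlinarith [hI₂nn, hε.le]
      linarith
    exact le_of_forall_pos_le_add key
  -- conclude
  have hchar1 := (hchar a ha).1
  have hchar2 := (hchar a ha).2
  have hφ'a : 0 < φ' a := hφ'pos a ha
  have hstep : k / (2 * c₂) * φ'' a ≤ k * φ' a / (2 * a) := by
    rw [div_mul_eq_mul_div, div_le_div_iff₀ (by positivity) (by positivity)]
    nlinarith
  calc k / (2 * c₂) * φ'' a * I₂ ≤ k * φ' a / (2 * a) * I₂ :=
        mul_le_mul_of_nonneg_right hstep hI₂nn
    _ ≤ IA := main
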